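/- Let D = Z_2(t) be the field of rational functions over Z_2. For every pair A, B ∈ D, there exists exactly one pair (f, g) of additive functions f, g : D → D with f(1) = A, f(t) = B, and x^{-1} f(x) + g(x^{-1}) = 0 for every nonzero x ∈ D; moreover necessarily f = g. In particular, Question 2 (whether the existence of such f, g forces D to be perfect) has a negative answer, since Z_2(t) is not perfect. -/

import Mathlib

noncomputable section

local notation "K" => RatFunc (ZMod 2)

instance K_charP : CharP K 2 :=
  charP_of_injective_algebraMap (algebraMap (ZMod 2) K).injective 2

private lemma sq_add (a b : K) : (a + b) ^ 2 = a ^ 2 + b ^ 2 := by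
  linear_combination a * b * (CharTwo.two_eq_zero (R := K))

private lemma kadd_eq_zero {a b : K} (h : a + b = 0) : a = b := by
  have h2 := eq_neg_of_add_eq_zero_left h
  rwa [CharTwo.neg_eq] at h2

private lemma not_sq_X : ¬ ∃ y : K, y ^ 2 = RatFunc.X := by
  rintro ⟨y, hy⟩
  have hy0 : y ≠ 0 := by
    rintro rfl
    exact RatFunc.X_ne_zero (by simpa using hy.symm)
  have hdK : (algebraMap (Polynomial (ZMod 2)) K) y.denom ≠ 0 :=
    RatFunc.algebraMap_ne_zero (RatFunc.denom_ne_zero y)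
  have hnd := RatFunc.num_div_denom y
  have hnd2 := (div_eq_iff hdK).mp hnd
  have h1 : (algebraMap (Polynomial (ZMod 2)) K) (y.num ^ 2) =
      (algebraMap (Polynomial (ZMod 2)) K) (Polynomial.X * y.denom ^ 2) := by
    rw [map_pow, map_mul, map_pow, RatFunc.algebraMap_X, ← hy, hnd2]
    ring
  have h2 := RatFunc.algebraMap_injective (ZMod 2) h1
  have hn0 : y.num ≠ 0 := RatFunc.num_ne_zero hy0
  have hd0 : y.denom ≠ 0 := RatFunc.denom_ne_zero y
  have := congrArg Polynomial.natDegree h2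
  rw [Polynomial.natDegree_pow, Polynomial.natDegree_mul Polynomial.X_ne_zero (pow_ne_zero 2 hd0),
    Polynomial.natDegree_pow, Polynomial.natDegree_X] at this
  omega

private lemma poly_decomp (r : Polynomial (ZMod 2)) :
    ∃ p q : K, algebraMap (Polynomial (ZMod 2)) K r = p ^ 2 + RatFunc.X * q ^ 2 := by
  induction r using Polynomial.induction_on' with
  | add f g hf hg =>
    obtain ⟨p, q, hp⟩ := hf
    obtain ⟨p', q', hq⟩ := hg
    exact ⟨p + p', q + q', by rw [map_add, hp, hq, sq_add, sq_add]; ring⟩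
  | monomial n a =>
    have ha : a = 0 ∨ a = 1 := by fin_cases a; exacts [Or.inl rfl, Or.inr rfl]
    have hmon : (Polynomial.monomial n a) = Polynomial.C a * Polynomial.X ^ n :=
      Polynomial.C_mul_X_pow_eq_monomial.symm
    rcases ha with rfl | rfl
    · exact ⟨0, 0, by simp⟩
    · have hX : algebraMap (Polynomial (ZMod 2)) K (Polynomial.monomial n 1) = RatFunc.X ^ n := by
        rw [hmon, map_mul, map_pow, RatFunc.algebraMap_X, Polynomial.C_1, map_one, one_mul]
      rcases Nat.even_or_odd n with ⟨k, hk⟩ | ⟨k, hk⟩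
      · exact ⟨RatFunc.X ^ k, 0, by rw [hX, hk]; ring⟩
      · exact ⟨0, RatFunc.X ^ k, by rw [hX, hk]; ring⟩

private lemma decomp (x : K) : ∃ p q : K, x = p ^ 2 + RatFunc.X * q ^ 2 := by
  obtain ⟨p, q, h⟩ := poly_decomp (x.num * x.denom)
  have hd : (algebraMap (Polynomial (ZMod 2)) K) x.denom ≠ 0 :=
    RatFunc.algebraMap_ne_zero (RatFunc.denom_ne_zero x)
  set d := (algebraMap (Polynomial (ZMod 2)) K) x.denom with hdd
  have hx : (algebraMap (Polynomial (ZMod 2)) K) x.num = x * d :=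
    (div_eq_iff hd).mp (RatFunc.num_div_denom x)
  refine ⟨p / d, q / d, ?_⟩
  have h2 : x * d ^ 2 = p ^ 2 + RatFunc.X * q ^ 2 := by
    rw [← h, map_mul, hx]; ring
  field_simp
  linear_combination h2

private lemma decomp_unique {p q p' q' : K}
    (h : p ^ 2 + RatFunc.X * q ^ 2 = p' ^ 2 + RatFunc.X * q' ^ 2) : p = p' ∧ q = q' := by
  have hq : q = q' := by
    by_contra hq
    have hqq : q + q' ≠ 0 := fun hc => hq (kadd_eq_zero hc)
    refine not_sq_X ⟨(p + p') / (q + q'), ?_⟩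
    rw [div_pow, div_eq_iff (pow_ne_zero 2 hqq), sq_add, sq_add]
    linear_combination h + (p'^2 - RatFunc.X*q^2) * (CharTwo.two_eq_zero (R := K))
  subst hq
  have hp : (p + p') ^ 2 = 0 := by
    rw [sq_add]
    linear_combination h + p' ^ 2 * (CharTwo.two_eq_zero (R := K))
  exact ⟨kadd_eq_zero (pow_eq_zero_iff (n := 2) (by norm_num) |>.mp hp), rfl⟩

private def pp (x : K) : K := (decomp x).choose
private def qq (x : K) : K := (decomp x).choose_spec.choose

private lemma pp_qq_spec (x : K) : x = pp x ^ 2 + RatFunc.X * qq x ^ 2 :=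
  (decomp x).choose_spec.choose_spec

private lemma pp_qq_eq {x p q : K} (h : x = p ^ 2 + RatFunc.X * q ^ 2) :
    pp x = p ∧ qq x = q :=
  decomp_unique ((pp_qq_spec x).symm.trans h)

private lemma pp_add (x y : K) : pp (x + y) = pp x + pp y ∧ qq (x + y) = qq x + qq y := by
  refine pp_qq_eq ?_
  rw [sq_add, sq_add]
  have hx := pp_qq_spec x
  have hy := pp_qq_spec y
  linear_combination hx + hy

private lemma pp_one : pp (1 : K) = 1 ∧ qq (1 : K) = 0 := pp_qq_eq (by ring)

private lemma pp_X : pp (RatFunc.X : K) = 0 ∧ qq (RatFunc.X : K) = 1 := pp_qq_eq (by ring)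

private lemma pp_zero : pp (0 : K) = 0 ∧ qq (0 : K) = 0 := pp_qq_eq (by ring)

private lemma pp_inv {x : K} (hx : x ≠ 0) :
    pp x⁻¹ = pp x * x⁻¹ ∧ qq x⁻¹ = qq x * x⁻¹ := by
  refine pp_qq_eq ?_
  have h := pp_qq_spec x
  field_simp
  linear_combination h

private lemma f_sq (A : K) (f g : K → K)
    (hf : ∀ x y, f (x + y) = f x + f y)
    (hg : ∀ x y, g (x + y) = g x + g y)
    (h1 : f 1 = A)
    (he : ∀ x : K, x ≠ 0 → x⁻¹ * f x + g x⁻¹ = 0) :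
    ∀ x : K, f (x ^ 2) = A * x := by
  have h2 := CharTwo.two_eq_zero (R := K)
  have hf0 : f 0 = 0 := by
    have := hf 0 0
    simp only [add_zero] at this
    linear_combination -this
  intro x
  by_cases hx0 : x = 0
  · subst hx0; norm_num [hf0]
  by_cases hx1 : x = 1
  · subst hx1; simpa using h1
  have hx1' : x + 1 ≠ 0 := fun hc => hx1 (kadd_eq_zero hc)
  have hsum : x⁻¹ + (x + 1)⁻¹ = (x * (x + 1))⁻¹ := by
    field_simp
    linear_combination x * h2
  have hgx := kadd_eq_zero (he x hx0)
  have hg1 := kadd_eq_zero (he (x + 1) hx1')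
  have hgz := kadd_eq_zero (he (x * (x + 1)) (mul_ne_zero hx0 hx1'))
  have hadd := hg x⁻¹ (x + 1)⁻¹
  rw [hsum, ← hgx, ← hg1, ← hgz] at hadd
  have hfx1 : f (x + 1) = f x + A := by rw [hf x 1, h1]
  have hfz : f (x * (x + 1)) = f (x ^ 2) + f x := by
    rw [show x * (x + 1) = x ^ 2 + x by ring, hf]
  rw [hfz, hfx1] at hadd
  field_simp at hadd
  linear_combination hadd + f x * x * h2

private lemma f_Xsq (B : K) (f g : K → K)
    (hf : ∀ x y, f (x + y) = f x + f y)
    (hg : ∀ x y, g (x + y) = g x + g y)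
    (hXB : f RatFunc.X = B)
    (he : ∀ x : K, x ≠ 0 → x⁻¹ * f x + g x⁻¹ = 0) :
    ∀ x : K, f (RatFunc.X * x ^ 2) = B * x := by
  have h2 := CharTwo.two_eq_zero (R := K)
  have hX0 : (RatFunc.X : K) ≠ 0 := RatFunc.X_ne_zero
  have hf0 : f 0 = 0 := by
    have := hf 0 0
    simp only [add_zero] at this
    linear_combination -this
  intro x
  by_cases hx0 : x = 0
  · subst hx0; norm_num [hf0]
  by_cases hx1 : x = 1
  · subst hx1; norm_num [hXB]
  have hx1' : x + 1 ≠ 0 := fun hc => hx1 (kadd_eq_zero hc)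
  have ha : (RatFunc.X * x) ≠ 0 := mul_ne_zero hX0 hx0
  have hb : (RatFunc.X * (x + 1)) ≠ 0 := mul_ne_zero hX0 hx1'
  have hc : (RatFunc.X * x * (x + 1)) ≠ 0 := mul_ne_zero ha hx1'
  have hsum : (RatFunc.X * x)⁻¹ + (RatFunc.X * (x + 1))⁻¹ = (RatFunc.X * x * (x + 1))⁻¹ := by
    field_simp
    linear_combination x * h2
  have hgx := kadd_eq_zero (he _ ha)
  have hg1 := kadd_eq_zero (he _ hb)
  have hgz := kadd_eq_zero (he _ hc)
  have hadd := hg (RatFunc.X * x)⁻¹ (RatFunc.X * (x + 1))⁻¹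
  rw [hsum, ← hgx, ← hg1, ← hgz] at hadd
  have hfx1 : f (RatFunc.X * (x + 1)) = f (RatFunc.X * x) + B := by
    rw [show RatFunc.X * (x + 1) = RatFunc.X * x + RatFunc.X by ring, hf, hXB]
  have hfz : f (RatFunc.X * x * (x + 1)) = f (RatFunc.X * x ^ 2) + f (RatFunc.X * x) := by
    rw [show RatFunc.X * x * (x + 1) = RatFunc.X * x ^ 2 + RatFunc.X * x by ring, hf]
  rw [hfz, hfx1] at hadd
  field_simp at hadd
  have key : (f (RatFunc.X * x ^ 2) - B * x - 2 * f (RatFunc.X * x) * x) *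
      (RatFunc.X ^ 2 * x * (x + 1)) = 0 := by linear_combination (RatFunc.X ^ 2 * x * (x + 1)) * hadd
  have key2 := (mul_eq_zero.mp key).resolve_right
    (mul_ne_zero (mul_ne_zero (pow_ne_zero 2 hX0) hx0) hx1')
  linear_combination key2 + f (RatFunc.X * x) * x * h2

private lemma master (A B : K) (f g : K → K)
    (hf : ∀ x y, f (x + y) = f x + f y)
    (hg : ∀ x y, g (x + y) = g x + g y)
    (h1 : f 1 = A) (hXB : f RatFunc.X = B)
    (he : ∀ x : K, x ≠ 0 → x⁻¹ * f x + g x⁻¹ = 0) :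
    f = (fun x => A * pp x + B * qq x) ∧ g = (fun x => A * pp x + B * qq x) := by
  have hfs := f_sq A f g hf hg h1 he
  have hfX := f_Xsq B f g hf hg hXB he
  have hfeq : ∀ x : K, f x = A * pp x + B * qq x := by
    intro x
    conv_lhs => rw [pp_qq_spec x]
    rw [hf, hfs, hfX]
  refine ⟨funext hfeq, funext fun y => ?_⟩
  by_cases hy : y = 0
  · subst hy
    have hg0 : g 0 = 0 := by
      have := hg 0 0
      simp only [add_zero] at this
      linear_combination -this
    simp [hg0, pp_zero.1, pp_zero.2]
  · have hyi : y⁻¹ ≠ 0 := inv_ne_zero hy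
    have hkey := kadd_eq_zero (he y⁻¹ hyi)
    rw [inv_inv] at hkey
    rw [← hkey, hfeq y⁻¹, (pp_inv hy).1, (pp_inv hy).2]
    field_simp

theorem stmt_18 (A B : RatFunc (ZMod 2)) :
    (∃! fg : (RatFunc (ZMod 2) → RatFunc (ZMod 2)) × (RatFunc (ZMod 2) → RatFunc (ZMod 2)),
      (∀ x y, fg.1 (x + y) = fg.1 x + fg.1 y) ∧
      (∀ x y, fg.2 (x + y) = fg.2 x + fg.2 y) ∧
      fg.1 1 = A ∧ fg.1 RatFunc.X = B ∧
      (∀ x : RatFunc (ZMod 2), x ≠ 0 → x⁻¹ * fg.1 x + fg.2 x⁻¹ = 0)) ∧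
    (∀ fg : (RatFunc (ZMod 2) → RatFunc (ZMod 2)) × (RatFunc (ZMod 2) → RatFunc (ZMod 2)),
      ((∀ x y, fg.1 (x + y) = fg.1 x + fg.1 y) ∧
       (∀ x y, fg.2 (x + y) = fg.2 x + fg.2 y) ∧
       fg.1 1 = A ∧ fg.1 RatFunc.X = B ∧
       (∀ x : RatFunc (ZMod 2), x ≠ 0 → x⁻¹ * fg.1 x + fg.2 x⁻¹ = 0)) → fg.1 = fg.2) ∧
    ¬ ∃ y : RatFunc (ZMod 2), y ^ 2 = RatFunc.X := by
  have h2 := CharTwo.two_eq_zero (R := K)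
  set f₀ : K → K := fun x => A * pp x + B * qq x with hf₀
  have hadd : ∀ x y : K, f₀ (x + y) = f₀ x + f₀ y := by
    intro x y
    simp only [hf₀, (pp_add x y).1, (pp_add x y).2]
    ring
  have hone : f₀ 1 = A := by simp [hf₀, pp_one.1, pp_one.2]
  have hXv : f₀ RatFunc.X = B := by simp [hf₀, pp_X.1, pp_X.2]
  have hfe : ∀ x : K, x ≠ 0 → x⁻¹ * f₀ x + f₀ x⁻¹ = 0 := by
    intro x hx
    simp only [hf₀, (pp_inv hx).1, (pp_inv hx).2]
    linear_combination (x⁻¹ * (A * pp x + B * qq x)) * h2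
  refine ⟨⟨(f₀, f₀), ⟨hadd, hadd, hone, hXv, hfe⟩, ?_⟩, ?_, not_sq_X⟩
  · rintro ⟨f, g⟩ ⟨hf, hg, h1, hX, he⟩
    obtain ⟨e1, e2⟩ := master A B f g hf hg h1 hX he
    exact Prod.ext e1 e2
  · rintro ⟨f, g⟩ ⟨hf, hg, h1, hX, he⟩
    obtain ⟨e1, e2⟩ := master A B f g hf hg h1 hX he
    exact e1.trans e2.symm
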